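/- arXiv:2104.08833 — 2 statements merged into one kernel-verified Lean document; each statement's English description precedes it below -/
import Mathlib

section
/- The Fubini-type polynomials satisfy the explicit formula a_n^{(α)}(x) = 2^α · Σ_{k=0}^{n} C(n,k) · (Σ_{i=0}^{k} ⟨−2α⟩_i · (−1)^i · S(k,i)) · x^{n−k}, where S(k,i) are Stirling numbers of the second kind and ⟨x⟩_i is the falling factorial. -/
open Finset PowerSeries

/-- Stirling numbers of the second kind. -/
def stirling2 : ℕ → ℕ → ℕ
  | 0, 0 => 1
  | 0, _ + 1 => 0
  | _ + 1, 0 => 0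
  | n + 1, k + 1 => (k + 1) * stirling2 n (k + 1) + stirling2 n k

/-- The falling factorial `⟨x⟩_i = x(x-1)⋯(x-i+1)`. -/
def fall (x : ℚ) (m : ℕ) : ℚ := ∏ j ∈ Finset.range m, (x - j)

lemma stirling2_zero_succ (i : ℕ) : stirling2 0 (i+1) = 0 := rfl
lemma stirling2_succ_zero (n : ℕ) : stirling2 (n+1) 0 = 0 := rfl
lemma stirling2_succ_succ (n k : ℕ) :
    stirling2 (n+1) (k+1) = (k + 1) * stirling2 n (k + 1) + stirling2 n k := rfl

lemma stirling2_eq_zero_of_lt : ∀ {n k : ℕ}, n < k → stirling2 n k = 0 := by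
  intro n
  induction n with
  | zero => intro k hk; match k, hk with | k+1, _ => rfl
  | succ n ih =>
    intro k hk
    match k, hk with
    | k+1, hk =>
      rw [stirling2_succ_succ, ih (by omega), ih (by omega)]; ring

lemma stirling2_succ_one (n : ℕ) : stirling2 (n+1) 1 = 1 := by
  induction n with
  | zero => rfl
  | succ n ih =>
    rw [stirling2_succ_succ, stirling2_succ_zero, add_zero]; simpa using ih

lemma J (k : ℕ) : ∀ i : ℕ, ∑ j ∈ range (k+1), k.choose j * stirling2 j i
    = stirling2 (k+1) (i+1) := by
  induction k with
  | zero =>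
    intro i
    simp [stirling2_succ_succ, stirling2_zero_succ]
  | succ k ih =>
    intro i
    rw [Finset.sum_range_succ' _ (k+1)]
    have split : ∑ j ∈ range (k+1), (k+1).choose (j+1) * stirling2 (j+1) i
        = ∑ j ∈ range (k+1), k.choose j * stirling2 (j+1) i
          + ∑ j ∈ range (k+1), k.choose (j+1) * stirling2 (j+1) i := by
      rw [← Finset.sum_add_distrib]
      refine Finset.sum_congr rfl fun j _ => by rw [Nat.choose_succ_succ, add_mul]
    rw [split]
    have h2 : ∑ j ∈ range (k+1), k.choose (j+1) * stirling2 (j+1) i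
          + k.choose 0 * stirling2 0 i = stirling2 (k+1) (i+1) := by
      rw [← Finset.sum_range_succ' (fun j => k.choose j * stirling2 j i) (k+1),
        Finset.sum_range_succ, Nat.choose_succ_self, zero_mul, add_zero, ih]
    match i with
    | 0 =>
      simp only [stirling2_succ_zero, mul_zero, Finset.sum_const_zero, zero_add,
        Nat.choose_zero_right, one_mul]
      show stirling2 0 0 = stirling2 (k+2) 1
      rw [stirling2_succ_one]; rfl
    | i+1 =>
      have h3 : ∑ j ∈ range (k+1), k.choose j * stirling2 (j+1) (i+1)
          = (i+1) * stirling2 (k+1) (i+2) + stirling2 (k+1) (i+1) := by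
        rw [← ih (i+1), ← ih i, Finset.mul_sum, ← Finset.sum_add_distrib]
        refine Finset.sum_congr rfl fun j _ => by
          rw [stirling2_succ_succ]; ring
      rw [h3]
      have h2' : ∑ j ∈ range (k+1), k.choose (j+1) * stirling2 (j+1) (i+1)
          = stirling2 (k+1) (i+2) := by
        rw [← h2, stirling2_zero_succ, mul_zero, add_zero]
      rw [h2', Nat.choose_zero_right, one_mul, stirling2_zero_succ,
        stirling2_succ_succ (k+1) (i+1)]
      ring

noncomputable def rise (m i : ℕ) : ℚ := ∏ j ∈ range i, ((m:ℚ)+j)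
noncomputable def bcoef (m k : ℕ) : ℚ :=
  ∑ i ∈ range (k+1), rise m i * stirling2 k i

lemma rise_zero (m : ℕ) : rise m 0 = 1 := by simp [rise]

lemma rise_rec (m i : ℕ) : rise m (i+1) = (m:ℚ) * rise (m+1) i := by
  unfold rise
  rw [Finset.prod_range_succ' (fun j => (m:ℚ)+j) i]
  push_cast
  rw [add_zero, mul_comm]
  congr 1
  exact Finset.prod_congr rfl fun j _ => by ring

lemma rkey (m i : ℕ) :
    rise (m+1) i - (i:ℚ) * rise (m+1) (i-1) = rise m i := by
  match i with
  | 0 => simp [rise_zero]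
  | s+1 =>
    have h : rise (m+1) (s+1) = rise (m+1) s * ((m:ℚ)+1+s) := by
      unfold rise; rw [Finset.prod_range_succ]; push_cast; ring
    rw [Nat.succ_sub_one, h, rise_rec m s]
    push_cast
    ring

lemma step_id (m k : ℕ) :
    2 * bcoef (m+1) k - ∑ j ∈ range (k+1), (k.choose j : ℚ) * bcoef (m+1) j
      = bcoef m k := by
  have hJ : ∀ i, ∑ j ∈ range (k+1), (k.choose j : ℚ) * (stirling2 j i : ℚ)
      = (stirling2 (k+1) (i+1) : ℚ) := by
    intro i
    rw [← J k i]
    push_cast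
    rfl
  have hsum : ∑ j ∈ range (k+1), (k.choose j : ℚ) * bcoef (m+1) j
      = ∑ i ∈ range (k+1), rise (m+1) i * (stirling2 (k+1) (i+1) : ℚ) := by
    have h1 : ∀ j ∈ range (k+1), (k.choose j : ℚ) * bcoef (m+1) j
        = ∑ i ∈ range (k+1),
            rise (m+1) i * ((k.choose j : ℚ) * (stirling2 j i : ℚ)) := by
      intro j hj
      rw [mem_range] at hj
      unfold bcoef
      rw [Finset.mul_sum]
      rw [← Finset.sum_subset
        (Finset.range_subset_range.2 (Nat.succ_le_succ (Nat.lt_succ_iff.mp hj)))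
        (fun i hi hni => ?_)]
      · exact Finset.sum_congr rfl fun i _ => by ring
      · rw [mem_range] at hi
        rw [mem_range, not_lt] at hni
        rw [stirling2_eq_zero_of_lt (by omega)]
        push_cast
        ring
    rw [Finset.sum_congr rfl h1, Finset.sum_comm]
    exact Finset.sum_congr rfl fun i _ => by rw [← Finset.mul_sum, hJ]
  have hshift : ∑ i ∈ range (k+1), ((i:ℚ)+1) * rise (m+1) i * (stirling2 k (i+1) : ℚ)
      = ∑ i ∈ range (k+1), (i:ℚ) * rise (m+1) (i-1) * (stirling2 k i : ℚ) := by
    have e1 := Finset.sum_range_succ'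
      (fun i => (i:ℚ) * rise (m+1) (i-1) * (stirling2 k i : ℚ)) (k+1)
    have e2 := Finset.sum_range_succ
      (fun i => (i:ℚ) * rise (m+1) (i-1) * (stirling2 k i : ℚ)) (k+1)
    have hg0 : ((0:ℕ):ℚ) * rise (m+1) (0-1) * (stirling2 k 0 : ℚ) = 0 := by
      push_cast; ring
    have hgk : ((k+1:ℕ):ℚ) * rise (m+1) (k+1-1) * (stirling2 k (k+1) : ℚ) = 0 := by
      rw [stirling2_eq_zero_of_lt (by omega)]; push_cast; ring
    calc ∑ i ∈ range (k+1), ((i:ℚ)+1) * rise (m+1) i * (stirling2 k (i+1) : ℚ)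
        = ∑ i ∈ range (k+1),
            ((i+1:ℕ):ℚ) * rise (m+1) ((i+1)-1) * (stirling2 k (i+1) : ℚ) := by
          refine Finset.sum_congr rfl fun i _ => by push_cast; ring_nf
      _ = ∑ i ∈ range (k+2), (i:ℚ) * rise (m+1) (i-1) * (stirling2 k i : ℚ) := by
          rw [e1, hg0, add_zero]
      _ = ∑ i ∈ range (k+1), (i:ℚ) * rise (m+1) (i-1) * (stirling2 k i : ℚ) := by
          rw [e2, hgk, add_zero]
  have expand : ∑ i ∈ range (k+1), rise (m+1) i * (stirling2 (k+1) (i+1) : ℚ)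
      = ∑ i ∈ range (k+1), (i:ℚ) * rise (m+1) (i-1) * (stirling2 k i : ℚ)
        + ∑ i ∈ range (k+1), rise (m+1) i * (stirling2 k i : ℚ) := by
    rw [← hshift, ← Finset.sum_add_distrib]
    refine Finset.sum_congr rfl fun i _ => ?_
    rw [stirling2_succ_succ]
    push_cast
    ring
  rw [hsum, expand]
  unfold bcoef
  rw [Finset.mul_sum, ← Finset.sum_add_distrib, ← Finset.sum_sub_distrib]
  exact Finset.sum_congr rfl fun i _ => by rw [← rkey m i]; ring

noncomputable def Bser (m : ℕ) : PowerSeries ℚ :=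
  PowerSeries.mk fun k => bcoef m k / k.factorial

lemma fact_div (n j : ℕ) (h : j ≤ n) (b c : ℚ) :
    (b/(j.factorial:ℚ)) * (c / ((n-j).factorial:ℚ))
      = (n.choose j : ℚ) * (b * c) / n.factorial := by
  have h1 := Nat.choose_mul_factorial_mul_factorial h
  have h2 : ((n.choose j * j.factorial * (n-j).factorial : ℕ) : ℚ)
      = (n.factorial : ℚ) := by rw [h1]
  push_cast at h2
  have hc : (n.choose j : ℚ) = (n.factorial:ℚ)/(j.factorial * (n-j).factorial) := by
    rw [eq_div_iff (by positivity), ← h2]; ring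
  rw [hc]
  have h3 : (j.factorial:ℚ) ≠ 0 := by positivity
  have h4 : ((n-j).factorial:ℚ) ≠ 0 := by positivity
  have h5 : (n.factorial:ℚ) ≠ 0 := by positivity
  field_simp

lemma coeff_two_sub_exp (j : ℕ) :
    PowerSeries.coeff j ((2:PowerSeries ℚ) - exp ℚ)
      = (if j = 0 then 2 else 0) - 1/j.factorial := by
  have h2 : (2 : PowerSeries ℚ) = PowerSeries.C 2 := by rw [map_ofNat]
  rw [map_sub, h2, PowerSeries.coeff_C]
  simp [PowerSeries.coeff_exp]

lemma mul_step (m : ℕ) :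
    ((2:PowerSeries ℚ) - exp ℚ) * Bser (m+1) = Bser m := by
  ext n
  rw [PowerSeries.coeff_mul, Finset.Nat.sum_antidiagonal_eq_sum_range_succ_mk]
  simp only [coeff_two_sub_exp, Bser, PowerSeries.coeff_mk]
  have hsplit : ∀ j ∈ range (n+1),
      ((if j = 0 then (2:ℚ) else 0) - 1/j.factorial)
          * (bcoef (m+1) (n-j) / ((n-j).factorial:ℚ))
      = (if j = 0 then 2 * (bcoef (m+1) n / n.factorial) else 0)
          - (n.choose j : ℚ) * (1 * bcoef (m+1) (n-j)) / n.factorial := by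
    intro j hj
    rw [mem_range] at hj
    rw [sub_mul, fact_div n j (by omega)]
    congr 1
    split
    · next h => subst h; rw [Nat.sub_zero]
    · ring
  rw [Finset.sum_congr rfl hsplit, Finset.sum_sub_distrib,
    Finset.sum_ite_eq' (range (n+1)) 0
      (fun _ => 2 * (bcoef (m+1) n / n.factorial))]
  have hrefl : ∑ j ∈ range (n+1), (n.choose j:ℚ) * (1 * bcoef (m+1) (n-j))
      = ∑ j ∈ range (n+1), (n.choose j:ℚ) * bcoef (m+1) j := by
    rw [← Finset.sum_range_reflect (fun j => (n.choose j:ℚ) * bcoef (m+1) j) (n+1)]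
    refine Finset.sum_congr rfl fun j hj => ?_
    rw [mem_range] at hj
    have h1 : n + 1 - 1 - j = n - j := by omega
    rw [h1, Nat.choose_symm (by omega), one_mul]
  rw [← Finset.sum_div, hrefl, if_pos (by simp), ← step_id m n, sub_div,
    mul_div_assoc]

lemma key (m : ℕ) : ((2:PowerSeries ℚ) - exp ℚ)^m * Bser m = 1 := by
  induction m with
  | zero =>
    rw [pow_zero, one_mul]
    ext n
    rw [Bser, PowerSeries.coeff_mk, PowerSeries.coeff_one]
    have hb : bcoef 0 n = if n = 0 then 1 else 0 := by
      unfold bcoef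
      match n with
      | 0 => simp [rise_zero]; rfl
      | s+1 =>
        rw [if_neg (by omega), Finset.sum_eq_zero]
        intro i hi
        match i with
        | 0 => rw [stirling2_succ_zero]; push_cast; ring
        | i+1 => rw [rise_rec]; push_cast; ring
    rw [hb]
    split
    · next h => subst h; simp
    · simp
  | succ m ih =>
    calc ((2:PowerSeries ℚ) - exp ℚ)^(m+1) * Bser (m+1)
        = ((2:PowerSeries ℚ) - exp ℚ)^m * (((2:PowerSeries ℚ) - exp ℚ) * Bser (m+1)) := by
          rw [pow_succ, mul_assoc]
      _ = 1 := by rw [mul_step, ih]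

lemma fall_conv (m i : ℕ) : fall (-(m : ℚ)) i * (-1:ℚ)^i = rise m i := by
  unfold fall rise
  have h1 : (-1:ℚ)^i = ∏ _j ∈ range i, (-1:ℚ) := by
    rw [Finset.prod_const, Finset.card_range]
  rw [h1, ← Finset.prod_mul_distrib]
  exact Finset.prod_congr rfl fun j _ => by ring

theorem fubiniType_explicit (α : ℕ) (a : ℕ → ℚ → ℚ)
    (ha : ∀ x : ℚ,
      ((2 : PowerSeries ℚ) - PowerSeries.exp ℚ) ^ (2 * α) *
          PowerSeries.mk (fun n => a n x / n.factorial) =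
        (2 : PowerSeries ℚ) ^ α * PowerSeries.mk (fun n => x ^ n / n.factorial))
    (n : ℕ) (x : ℚ) :
    a n x =
      2 ^ α * ∑ k ∈ Finset.range (n + 1), (n.choose k : ℚ) *
        (∑ i ∈ Finset.range (k + 1),
          fall (-(2 * α : ℚ)) i * (-1 : ℚ) ^ i * (stirling2 k i : ℚ)) * x ^ (n - k) := by
  have hE := ha x
  set E : PowerSeries ℚ := PowerSeries.mk (fun n => x ^ n / n.factorial) with hEdef
  set P : PowerSeries ℚ := ((2 : PowerSeries ℚ) - exp ℚ) ^ (2 * α) with hPdef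
  have hP0 : P ≠ 0 := by
    intro h
    have hc := congrArg (PowerSeries.constantCoeff) h
    rw [hPdef, map_pow, map_sub] at hc
    simp [PowerSeries.constantCoeff_exp, map_ofNat] at hc
    norm_num at hc
  have hmain : PowerSeries.mk (fun n => a n x / n.factorial)
      = (2:PowerSeries ℚ)^α * (Bser (2*α) * E) := by
    apply mul_left_cancel₀ hP0
    rw [hE]
    rw [show P * ((2:PowerSeries ℚ)^α * (Bser (2*α) * E))
        = (2:PowerSeries ℚ)^α * ((P * Bser (2*α)) * E) from by ring]
    rw [hPdef, key (2*α), one_mul]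
  have hcoeff := congrArg (PowerSeries.coeff n) hmain
  have h2C : (2:PowerSeries ℚ)^α = PowerSeries.C (2^α) := by
    rw [map_pow, map_ofNat]
  rw [PowerSeries.coeff_mk, h2C, PowerSeries.coeff_C_mul, PowerSeries.coeff_mul,
    Finset.Nat.sum_antidiagonal_eq_sum_range_succ_mk] at hcoeff
  simp only [Bser, hEdef, PowerSeries.coeff_mk] at hcoeff
  have hterm : ∀ j ∈ range (n+1),
      (bcoef (2*α) j / (j.factorial:ℚ)) * (x^(n-j)/((n-j).factorial:ℚ))
        = (n.choose j : ℚ) * (bcoef (2*α) j * x^(n-j)) / n.factorial := by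
    intro j hj
    rw [mem_range] at hj
    exact fact_div n j (by omega) _ _
  rw [Finset.sum_congr rfl hterm, ← Finset.sum_div] at hcoeff
  have hfact : (n.factorial:ℚ) ≠ 0 := by positivity
  have hres : a n x
      = 2^α * ∑ j ∈ range (n+1), (n.choose j:ℚ) * (bcoef (2*α) j * x^(n-j)) := by
    have h3 : a n x = (2 ^ α * ((∑ j ∈ range (n+1),
        (n.choose j:ℚ) * (bcoef (2*α) j * x^(n-j))) / (n.factorial:ℚ)))
          * (n.factorial:ℚ) := by
      rw [← hcoeff, div_mul_cancel₀ _ hfact]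
    rw [h3, mul_assoc, div_mul_cancel₀ _ hfact]
  refine hres.trans ?_
  congr 1
  refine Finset.sum_congr rfl fun k _ => ?_
  have hin : (∑ i ∈ range (k+1),
      fall (-(2 * α : ℚ)) i * (-1 : ℚ) ^ i * (stirling2 k i : ℚ)) = bcoef (2*α) k := by
    unfold bcoef
    refine Finset.sum_congr rfl fun i _ => ?_
    have hcast : (-(2 * α : ℚ)) = -(((2*α : ℕ)):ℚ) := by push_cast; ring
    rw [hcast, fall_conv]
  rw [hin]
  ring
end

section
/- The Fubini-type numbers satisfy a_n^{(α)} = 2^α · Σ_{i=0}^{n} ⟨−2α⟩_i · (−1)^i · S(n,i), where S(n,i) are Stirling numbers of the second kind and ⟨−2α⟩_i = (−2α)(−2α−1)⋯(−2α−i+1) is the falling factorial. -/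
open Finset PowerSeries

noncomputable def uu : PowerSeries ℚ := PowerSeries.exp ℚ - 1

lemma constantCoeff_uu : constantCoeff uu = 0 := by
  simp [uu, PowerSeries.constantCoeff_exp]

open scoped PowerSeries in
lemma derivative_exp' : d⁄dX ℚ (PowerSeries.exp ℚ) = PowerSeries.exp ℚ := by
  ext n
  rw [PowerSeries.coeff_derivative, PowerSeries.coeff_exp, PowerSeries.coeff_exp]
  have h1 : ((n+1).factorial : ℚ) ≠ 0 := by exact_mod_cast (Nat.factorial_pos _).ne'
  have h2 : ((n).factorial : ℚ) ≠ 0 := by exact_mod_cast (Nat.factorial_pos _).ne'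
  simp only [Algebra.algebraMap_self, map_div₀, map_one, map_natCast, RingHom.id_apply]
  rw [Nat.factorial_succ]
  field_simp
  norm_cast

open scoped PowerSeries in
lemma derivative_uu : d⁄dX ℚ uu = PowerSeries.exp ℚ := by
  unfold uu
  rw [map_sub, derivative_exp']
  simp

lemma stirlingGF : ∀ n i : ℕ, PowerSeries.coeff n (uu ^ i)
    = i.factorial * stirling2 n i / n.factorial := by
  intro n
  induction n with
  | zero =>
    intro i
    cases i with
    | zero => simp [stirling2]
    | succ i =>
      rw [PowerSeries.coeff_zero_eq_constantCoeff, map_pow, constantCoeff_uu]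
      simp [stirling2]
  | succ n ih =>
    intro i
    cases i with
    | zero => simp [stirling2, PowerSeries.coeff_one]
    | succ i =>
      have hd : PowerSeries.derivative ℚ (uu ^ (i+1))
          = PowerSeries.C ((i:ℚ)+1) * (uu ^ (i+1) + uu ^ i) := by
        rw [Derivation.leibniz_pow, derivative_uu]
        have : PowerSeries.exp ℚ = uu + 1 := by simp [uu]
        rw [this]
        simp only [Nat.add_sub_cancel, smul_eq_mul, nsmul_eq_mul, map_add, map_one,
          map_natCast]
        push_cast
        ring
      have := PowerSeries.coeff_derivative (uu ^ (i+1)) n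
      rw [hd] at this
      have hn1 : ((n:ℚ)+1) ≠ 0 := by positivity
      have key : PowerSeries.coeff (n+1) (uu ^ (i+1))
          = ((i:ℚ)+1) * (PowerSeries.coeff n (uu ^ (i+1)) + PowerSeries.coeff n (uu ^ i))
            / ((n:ℚ)+1) := by
        rw [eq_div_iff hn1]
        rw [PowerSeries.coeff_C_mul, map_add] at this
        linarith [this]
      rw [key, ih (i+1), ih i]
      have h2 : ((n).factorial : ℚ) ≠ 0 := by exact_mod_cast (Nat.factorial_pos _).ne'
      show _ = ((i+1).factorial : ℚ) * (stirling2 (n+1) (i+1) : ℚ) / ((n+1).factorial : ℚ)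
      rw [stirling2, Nat.factorial_succ n, Nat.factorial_succ i]
      push_cast
      field_simp

lemma stirling2_eq_zero : ∀ n i : ℕ, n < i → stirling2 n i = 0 := by
  intro n
  induction n with
  | zero => intro i hi; cases i with
    | zero => omega
    | succ j => rfl
  | succ n ih =>
    intro i hi
    cases i with
    | zero => omega
    | succ j =>
      rw [stirling2, ih (j+1) (by omega), ih j (by omega)]
      ring

lemma coeff_uu_pow_eq_zero {k i : ℕ} (h : k < i) : PowerSeries.coeff k (uu ^ i) = 0 := by
  rw [stirlingGF, stirling2_eq_zero _ _ h]
  simp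

lemma fall_succ (x : ℚ) (i : ℕ) : fall x (i+1) = fall x i * (x - i) :=
  Finset.prod_range_succ _ _

lemma fall_succ' (x : ℚ) (i : ℕ) : fall x (i+1) = fall (x-1) i * x := by
  rw [fall, Finset.prod_range_succ']
  congr 1
  · apply Finset.prod_congr rfl
    intro j _
    push_cast
    ring
  · norm_num

noncomputable def qq (m i : ℕ) : ℚ := fall (-(m:ℚ)) i * (-1)^i / i.factorial

lemma qq_zero (m : ℕ) : qq m 0 = 1 := by simp [qq, fall]

lemma qq_zero_succ (i : ℕ) : qq 0 (i+1) = 0 := by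
  simp [qq, fall_succ']

lemma qq_step (m i : ℕ) : qq (m+1) (i+1) = qq (m+1) i + qq m (i+1) := by
  have h1 : ((i).factorial : ℚ) ≠ 0 := by exact_mod_cast (Nat.factorial_pos _).ne'
  have h2 : fall (-(m:ℚ)) (i+1) = fall (-((m:ℚ)+1)) i * (-(m:ℚ)) := by
    rw [fall_succ']
    congr 2
    ring
  rw [qq, qq, qq, fall_succ, h2]
  have : -(((m:ℕ)+1:ℕ):ℚ) = -((m:ℚ)+1) := by push_cast; ring
  rw [this, Nat.factorial_succ, pow_succ]
  push_cast
  field_simp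
  ring

noncomputable def SS (m N : ℕ) : PowerSeries ℚ :=
  ∑ i ∈ Finset.range (N+1), PowerSeries.C (qq m i) * uu ^ i

lemma telescope (m N : ℕ) :
    (1 - uu) * SS (m+1) N = SS m N - PowerSeries.C (qq (m+1) N) * uu ^ (N+1) := by
  induction N with
  | zero =>
    have e1 : SS (m+1) 0 = 1 := by rw [SS, Finset.sum_range_one, qq_zero]; simp
    have e2 : SS m 0 = 1 := by rw [SS, Finset.sum_range_one, qq_zero]; simp
    rw [e1, e2, qq_zero]
    simp only [map_one, one_mul, pow_one, mul_one]
    ring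
  | succ N ih =>
    have hc : PowerSeries.C (qq m (N+1)) =
        PowerSeries.C (qq (m+1) (N+1)) - PowerSeries.C (qq (m+1) N) := by
      rw [← map_sub]
      congr 1
      have := qq_step m N
      linarith
    simp only [SS, Finset.sum_range_succ] at ih ⊢
    rw [hc]
    linear_combination ih

lemma inv_lemma (m N : ℕ) : ∃ E : PowerSeries ℚ,
    (1 - uu) ^ m * SS m N = 1 - uu ^ (N+1) * E := by
  induction m with
  | zero =>
    refine ⟨0, ?_⟩
    have hS : SS 0 N = 1 := by
      rw [SS, Finset.sum_eq_single_of_mem 0 (Finset.mem_range.mpr (Nat.succ_pos N))]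
      · simp [qq_zero]
      · intro i _ hi
        obtain ⟨j, rfl⟩ := Nat.exists_eq_succ_of_ne_zero hi
        rw [qq_zero_succ]
        simp
    rw [hS]
    simp
  | succ m ih =>
    obtain ⟨E, hE⟩ := ih
    refine ⟨E + PowerSeries.C (qq (m+1) N) * (1 - uu) ^ m, ?_⟩
    have t := telescope m N
    linear_combination ((1:PowerSeries ℚ) - uu) ^ m * t + hE

lemma coeff_SS (m N k : ℕ) (hk : k ≤ N) :
    PowerSeries.coeff k (SS m N)
      = ∑ i ∈ Finset.range (k+1), qq m i * (i.factorial * stirling2 k i / k.factorial) := by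
  calc PowerSeries.coeff k (SS m N)
      = ∑ i ∈ Finset.range (N+1), qq m i * PowerSeries.coeff k (uu ^ i) := by
        rw [SS, map_sum]
        exact Finset.sum_congr rfl fun i _ => PowerSeries.coeff_C_mul _ _ _
    _ = ∑ i ∈ Finset.range (k+1), qq m i * PowerSeries.coeff k (uu ^ i) := by
        refine (Finset.sum_subset (Finset.range_subset_range.mpr (Nat.succ_le_succ hk))
          (fun i hi hni => ?_)).symm
        rw [Finset.mem_range] at hni
        rw [coeff_uu_pow_eq_zero (by omega), mul_zero]
    _ = ∑ i ∈ Finset.range (k+1), qq m i * (i.factorial * stirling2 k i / k.factorial) := by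
        exact Finset.sum_congr rfl fun i _ => by rw [stirlingGF]

lemma mul_G (m : ℕ) :
    (1 - uu) ^ m * PowerSeries.mk (fun k => ∑ i ∈ Finset.range (k+1),
        qq m i * (i.factorial * stirling2 k i / k.factorial)) = 1 := by
  ext k
  obtain ⟨E, hE⟩ := inv_lemma m k
  rw [PowerSeries.coeff_mul]
  have h1 : ∀ p ∈ Finset.HasAntidiagonal.antidiagonal k,
      PowerSeries.coeff p.1 ((1 - uu) ^ m) *
        PowerSeries.coeff p.2 (PowerSeries.mk (fun k => ∑ i ∈ Finset.range (k+1),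
          qq m i * (i.factorial * stirling2 k i / k.factorial)))
      = PowerSeries.coeff p.1 ((1 - uu) ^ m) * PowerSeries.coeff p.2 (SS m k) := by
    intro p hp
    rw [Finset.HasAntidiagonal.mem_antidiagonal] at hp
    rw [PowerSeries.coeff_mk, coeff_SS m k p.2 (by omega)]
  rw [Finset.sum_congr rfl h1, ← PowerSeries.coeff_mul, hE]
  have h2 : PowerSeries.coeff k (uu ^ (k+1) * E) = 0 := by
    rw [PowerSeries.coeff_mul]
    apply Finset.sum_eq_zero
    intro p hp
    rw [Finset.HasAntidiagonal.mem_antidiagonal] at hp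
    rw [coeff_uu_pow_eq_zero (by omega), zero_mul]
  rw [map_sub, h2, sub_zero]

theorem fubiniTypeNumbers_explicit (α : ℕ) (a : ℕ → ℚ)
    (ha : ((2 : PowerSeries ℚ) - PowerSeries.exp ℚ) ^ (2 * α) *
          PowerSeries.mk (fun n => a n / n.factorial) =
        (2 : PowerSeries ℚ) ^ α)
    (n : ℕ) :
    a n = 2 ^ α * ∑ i ∈ Finset.range (n + 1),
        fall (-(2 * α : ℚ)) i * (-1 : ℚ) ^ i * (stirling2 n i : ℚ) := by
  set m := 2 * α with hm
  have h2exp : (2 : PowerSeries ℚ) - PowerSeries.exp ℚ = 1 - uu := by rw [uu]; ring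
  have hGm := mul_G m
  have hC2 : (2 : PowerSeries ℚ) ^ α = PowerSeries.C ((2:ℚ)^α) := by
    rw [map_pow, map_ofNat]
  have hne : ((1 : PowerSeries ℚ) - uu) ^ m ≠ 0 := by
    intro h
    have := congrArg (PowerSeries.constantCoeff) h
    rw [map_pow, map_sub, map_one, constantCoeff_uu] at this
    simp at this
  rw [h2exp] at ha
  have key : PowerSeries.mk (fun n => a n / n.factorial)
      = PowerSeries.C ((2:ℚ)^α) * PowerSeries.mk (fun k => ∑ i ∈ Finset.range (k+1),
          qq m i * (i.factorial * stirling2 k i / k.factorial)) := by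
    apply mul_left_cancel₀ hne
    rw [ha, hC2, mul_left_comm, hGm, mul_one]
  have hco := congrArg (PowerSeries.coeff n) key
  rw [PowerSeries.coeff_mk, PowerSeries.coeff_C_mul, PowerSeries.coeff_mk] at hco
  have hfac : ((n.factorial : ℚ)) ≠ 0 := by exact_mod_cast (Nat.factorial_pos _).ne'
  rw [div_eq_iff hfac] at hco
  rw [hco, Finset.mul_sum, Finset.sum_mul, Finset.mul_sum]
  apply Finset.sum_congr rfl
  intro i _
  have hif : ((i.factorial : ℚ)) ≠ 0 := by exact_mod_cast (Nat.factorial_pos _).ne'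
  rw [qq]
  have hmc : -((m:ℕ):ℚ) = -(2 * (α:ℚ)) := by rw [hm]; push_cast; ring
  rw [hmc]
  field_simp
end
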